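/- arXiv:1801.06566 — 5 statements merged into one kernel-verified Lean document; each statement's English description precedes it below -/
import Mathlib

section
/- If a family F of subsets of X contains a half-graph of size 2^{n+1} − 1 (elements a_1,…,a_{2^{n+1}−1} and sets F_1,…,F_{2^{n+1}−1} with a_i ∈ F_j iff i ≤ j), then Ldim(F) ≥ n. -/
open Finset

private lemma sum_two_pow' (d : ℕ) : ∑ i ∈ range d, 2 ^ (i + 1) = 2 ^ (d + 1) - 2 := by
  induction d with
  | zero => simp
  | succ d ih =>
    rw [sum_range_succ, ih, pow_succ 2 (d + 1)]
    have h1 : 1 ≤ 2 ^ (d + 1) := Nat.one_le_two_pow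
    omega

private lemma sum_pow_Ico (k n : ℕ) (h : k ≤ n) :
    ∑ i ∈ Ico k n, 2 ^ (n - i) = 2 ^ (n - k + 1) - 2 := by
  rw [Finset.sum_Ico_eq_sum_range]
  have hc : ∀ i ∈ range (n - k), 2 ^ (n - (k + i)) = 2 ^ ((n - k) - 1 - i + 1) := by
    intro i hi
    simp only [mem_range] at hi
    congr 1
    omega
  rw [Finset.sum_congr rfl hc, Finset.sum_range_reflect (fun i => 2 ^ (i + 1)) (n - k),
    sum_two_pow']

/-- Prefix sum used to index nodes of the binary search tree. -/
private def hgS (n k : ℕ) (g : ℕ → Bool) : ℕ :=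
  ∑ i ∈ range k, if g i then 2 ^ (n - i) else 0

private def hgExt {k : ℕ} (τ : Fin k → Bool) : ℕ → Bool :=
  fun i => if h : i < k then τ ⟨i, h⟩ else false

private lemma hgKey (n k : ℕ) (hk : k < n) (g : ℕ → Bool) :
    (hgS n k g + 2 ^ (n - k) - 1 ≤ hgS n n g) ↔ g k = true := by
  have hsplit : hgS n n g
      = hgS n k g + (if g k then 2 ^ (n - k) else 0)
        + ∑ i ∈ Ico (k + 1) n, (if g i then 2 ^ (n - i) else 0) := by
    unfold hgS
    rw [range_eq_Ico, ← Finset.sum_Ico_consecutive _ (Nat.zero_le (k + 1)) hk,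
      ← range_eq_Ico, sum_range_succ]
  have hR : ∑ i ∈ Ico (k + 1) n, (if g i then 2 ^ (n - i) else 0) ≤ 2 ^ (n - k) - 2 := by
    calc ∑ i ∈ Ico (k + 1) n, (if g i then 2 ^ (n - i) else 0)
        ≤ ∑ i ∈ Ico (k + 1) n, 2 ^ (n - i) :=
          Finset.sum_le_sum (by intro i _; split <;> simp)
      _ = 2 ^ (n - (k + 1) + 1) - 2 := sum_pow_Ico _ _ hk
      _ = 2 ^ (n - k) - 2 := by congr 2; omega
  have hp : 2 ≤ 2 ^ (n - k) := by
    calc 2 = 2 ^ 1 := rfl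
      _ ≤ 2 ^ (n - k) := Nat.pow_le_pow_right (by norm_num) (by omega)
  rw [hsplit]
  cases hgk : g k <;> simp <;> omega

private lemma hgBound (n k : ℕ) (hk : k ≤ n) (g : ℕ → Bool) :
    hgS n k g + 2 ^ (n - k) - 1 < 2 ^ (n + 1) - 1 := by
  have h1 : hgS n k g ≤ ∑ i ∈ Ico 0 k, 2 ^ (n - i) := by
    rw [← range_eq_Ico]
    exact Finset.sum_le_sum (by intro i _; split <;> simp)
  have h2 : ∑ i ∈ Ico 0 k, 2 ^ (n - i) + ∑ i ∈ Ico k n, 2 ^ (n - i)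
      = ∑ i ∈ Ico 0 n, 2 ^ (n - i) := Finset.sum_Ico_consecutive _ (Nat.zero_le k) hk
  have h3 := sum_pow_Ico k n hk
  have h4 := sum_pow_Ico 0 n (Nat.zero_le n)
  simp only [Nat.sub_zero] at h4
  have h6 : 2 ^ (n - k + 1) = 2 * 2 ^ (n - k) := by rw [pow_succ]; ring
  have h7 : 1 ≤ 2 ^ (n - k) := Nat.one_le_two_pow
  have h8 : 2 ≤ 2 ^ (n + 1) := by
    calc 2 = 2 ^ 1 := rfl
      _ ≤ 2 ^ (n + 1) := Nat.pow_le_pow_right (by norm_num) (by omega)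
  omega


/-- `LdimGe F n`: there is a binary element tree of height `n` (internal vertices
labeled by elements of `X`, leaves by members of `F`) all of whose `2^n` leaves are
well-labeled: for the leaf following branch `σ` (`true` = "go left"), the labeling
set `A` satisfies: for each vertex `a` above the leaf, `a ∈ A` iff the leaf is
left-below `a`.  Equivalently, the thicket shatter function satisfies `ρ_F n = 2^n`. -/
def LdimGe {X : Type*} (F : Set (Set X)) (n : ℕ) : Prop :=
  ∃ t : (k : Fin n) → (Fin k.1 → Bool) → X,
    ∀ σ : Fin n → Bool, ∃ A ∈ F, ∀ k : Fin n,
      (t k (fun i => σ ⟨i.1, i.2.trans k.2⟩) ∈ A ↔ σ k = true)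

/-- The Littlestone (thicket) dimension of a set system, as an extended natural number. -/
noncomputable def Ldim {X : Type*} (F : Set (Set X)) : ℕ∞ :=
  ⨆ (n : ℕ) (_ : LdimGe F n), (n : ℕ∞)

/-- A half-graph of size `n` in the bipartite membership graph of `F`. -/
def HalfGraph {X : Type*} (F : Set (Set X)) (n : ℕ) : Prop :=
  ∃ (a : Fin n → X) (A : Fin n → Set X), (∀ j, A j ∈ F) ∧ ∀ i j, a i ∈ A j ↔ i ≤ j

/-- a half-graph of size `2^(n+1) - 1` forces `Ldim F ≥ n`. -/
theorem halfGraph_ldimGe {X : Type*} (F : Set (Set X)) (n : ℕ)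
    (h : HalfGraph F (2 ^ (n + 1) - 1)) : LdimGe F n := by
  obtain ⟨a, A, hA, hab⟩ := h
  refine ⟨fun k τ => a ⟨hgS n k.1 (hgExt τ) + 2 ^ (n - k.1) - 1,
      hgBound n k.1 k.2.le (hgExt τ)⟩, ?_⟩
  intro σ
  have hjlt : hgS n n (hgExt σ) < 2 ^ (n + 1) - 1 := by
    have := hgBound n n le_rfl (hgExt σ)
    simpa using this
  refine ⟨A ⟨hgS n n (hgExt σ), hjlt⟩, hA _, ?_⟩
  intro k
  rw [hab, Fin.mk_le_mk]
  have hrestr : hgS n k.1 (hgExt fun i : Fin k.1 => σ ⟨i.1, i.2.trans k.2⟩)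
      = hgS n k.1 (hgExt σ) := by
    unfold hgS
    refine Finset.sum_congr rfl ?_
    intro i hi
    simp only [mem_range] at hi
    simp [hgExt, hi, hi.trans k.2]
  rw [hrestr]
  have hk := hgKey n k.1 k.2 (hgExt σ)
  rw [hk]
  simp [hgExt, k.2]
end

section
/- A first-order formula φ(x;y) has the order property if and only if the set system F_φ = {φ(M, b) : b ∈ M^{|y|}} has infinite Littlestone dimension. -/
open FirstOrder

/-- `φ(x;y)` has the order property in `M`: there are tuples `aᵢ, bⱼ` of every
finite length with `M ⊨ φ(aᵢ; bⱼ)` iff `i ≤ j`. -/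
def HasOrderProperty {L : Language} (M : Type*) [L.Structure M] {α β : Type*}
    (φ : L.Formula (α ⊕ β)) : Prop :=
  ∀ n : ℕ, ∃ (a : Fin n → α → M) (b : Fin n → β → M),
    ∀ i j, φ.Realize (Sum.elim (a i) (b j)) ↔ i ≤ j

/-- The concept class `F_φ = {φ(M, b) : b ∈ M^{|y|}}` of definable subsets of
`M^{|x|}`. -/
def conceptClass {L : Language} (M : Type*) [L.Structure M] {α β : Type*}
    (φ : L.Formula (α ⊕ β)) : Set (Set (α → M)) :=
  {S | ∃ b : β → M, S = {a : α → M | φ.Realize (Sum.elim a b)}}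

namespace LdimAux
variable {X : Type*}

def Shat (U : Set X) (G : Set (Set X)) : ℕ → Prop
  | 0 => G.Nonempty
  | n+1 => ∃ x ∈ U, Shat U {A ∈ G | x ∈ A} n ∧ Shat U {A ∈ G | x ∉ A} n

lemma shat_zero_iff {U : Set X} {G : Set (Set X)} : Shat U G 0 ↔ G.Nonempty := Iff.rfl

lemma shat_succ_iff {U : Set X} {G : Set (Set X)} {n : ℕ} :
    Shat U G (n+1) ↔ ∃ x ∈ U, Shat U {A ∈ G | x ∈ A} n ∧ Shat U {A ∈ G | x ∉ A} n := Iff.rfl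

lemma shat_mono : ∀ {n : ℕ} {U U' : Set X} {G G' : Set (Set X)},
    U ⊆ U' → G ⊆ G' → Shat U G n → Shat U' G' n
  | 0, _, _, _, _, _, hG, h => h.mono hG
  | n+1, _, _, _, _, hU, hG, ⟨x, hx, h1, h2⟩ =>
    ⟨x, hU hx, shat_mono hU (fun A hA => ⟨hG hA.1, hA.2⟩) h1,
      shat_mono hU (fun A hA => ⟨hG hA.1, hA.2⟩) h2⟩

lemma shat_nonempty : ∀ {n : ℕ} {U : Set X} {G : Set (Set X)}, Shat U G n → G.Nonempty
  | 0, _, _, h => h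
  | n+1, _, _, ⟨_, _, h1, _⟩ => (shat_nonempty h1).mono (fun A hA => hA.1)

lemma shat_step {n : ℕ} {U : Set X} {G : Set (Set X)} (h : Shat U G (n+1)) : Shat U G n := by
  obtain ⟨x, _, h1, _⟩ := h
  exact shat_mono (le_refl U) (fun A hA => hA.1) h1

lemma shat_anti {U : Set X} {G : Set (Set X)} : ∀ {n m : ℕ}, m ≤ n → Shat U G n → Shat U G m := by
  intro n
  induction n with
  | zero =>
    intro m hm h
    obtain rfl : m = 0 := by omega
    exact h
  | succ n ih =>
    intro m hm h
    rcases Nat.eq_or_lt_of_le hm with rfl | hlt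
    · exact h
    · exact ih (by omega) (shat_step h)

end LdimAux

namespace LdimAux
variable {X : Type*}

lemma shat_split : ∀ (n d₁ d₂ : ℕ), d₁ + d₂ = n →
    ∀ (U U₁ U₂ : Set X) (G : Set (Set X)), U ⊆ U₁ ∪ U₂ →
    Shat U G (d₁ + d₂ + 1) → Shat U₁ G d₁ ∨ Shat U₂ G d₂ := by
  intro n
  induction n using Nat.strong_induction_on with
  | _ n ih =>
    intro d₁ d₂ hn U U₁ U₂ G hUU h
    obtain ⟨x, hxU, hp, hm⟩ := h
    have hGne : G.Nonempty := (shat_nonempty hp).mono (fun A hA => hA.1)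
    rcases hUU hxU with hx1 | hx2
    · -- x ∈ U₁
      rcases d₁ with _ | e
      · exact Or.inl hGne
      · have he : e + 1 + d₂ = e + d₂ + 1 := by omega
        have h1 := ih (e + d₂) (by omega) e d₂ rfl U U₁ U₂ _ hUU (by rw [he] at hp; exact hp)
        have h2 := ih (e + d₂) (by omega) e d₂ rfl U U₁ U₂ _ hUU (by rw [he] at hm; exact hm)
        rcases h1 with h1 | h1
        · rcases h2 with h2 | h2
          · exact Or.inl ⟨x, hx1, h1, h2⟩
          · exact Or.inr (shat_mono (le_refl U₂) (fun A hA => hA.1) h2)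
        · exact Or.inr (shat_mono (le_refl U₂) (fun A hA => hA.1) h1)
    · -- x ∈ U₂
      rcases d₂ with _ | e
      · exact Or.inr hGne
      · have h1 := ih (d₁ + e) (by omega) d₁ e rfl U U₁ U₂ _ hUU hp
        have h2 := ih (d₁ + e) (by omega) d₁ e rfl U U₁ U₂ _ hUU hm
        rcases h1 with h1 | h1
        · exact Or.inl (shat_mono (le_refl U₁) (fun A hA => hA.1) h1)
        · rcases h2 with h2 | h2
          · exact Or.inl (shat_mono (le_refl U₁) (fun A hA => hA.1) h2)
          · exact Or.inr ⟨x, hx2, h1, h2⟩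

end LdimAux

namespace LdimAux
variable {X : Type*}

lemma walk (R : ℕ) : ∀ (q : ℕ) (U : Set X) (G : Set (Set X)),
    Shat U G (q * (R + 3)) →
    (∃ (xs : Fin q → X) (Bs : Fin q → Set X),
       (∀ i, xs i ∈ U) ∧ (∀ j, Bs j ∈ G) ∧ (∀ i j, xs i ∈ Bs j ↔ i < j)) ∨
    (∃ (η : X) (B : Set X) (U' : Set X) (G' : Set (Set X)),
       η ∈ U ∧ B ∈ G ∧ η ∈ B ∧ U' ⊆ U ∧ U' ⊆ B ∧ G' ⊆ G ∧
       (∀ A ∈ G', η ∉ A) ∧ Shat U' G' R) := by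
  intro q
  induction q with
  | zero =>
    intro U G _
    exact Or.inl ⟨Fin.elim0, Fin.elim0, fun i => i.elim0, fun j => j.elim0, fun i => i.elim0⟩
  | succ q ih =>
    intro U G h
    have e1 : (q + 1) * (R + 3) = (q * (R + 3) + (R + 1) + 1) + 1 := by ring
    rw [e1] at h
    obtain ⟨x, hxU, hp, hm⟩ := h
    obtain ⟨B, hBG, hxB⟩ := shat_nonempty hm
    have hsplit := shat_split (q * (R + 3) + (R + 1)) (q * (R + 3)) (R + 1) rfl
      U (U \ B) (U ∩ B) {A ∈ G | x ∈ A}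
      (fun y hy => by by_cases hyB : y ∈ B
                      · exact Or.inr ⟨hy, hyB⟩
                      · exact Or.inl ⟨hy, hyB⟩) hp
    rcases hsplit with h1 | h2
    · -- continue the walk inside U \ B
      rcases ih (U \ B) {A ∈ G | x ∈ A} h1 with ⟨xs', Bs', hU', hG', hpat⟩ | hround
      · refine Or.inl ⟨Fin.cons x xs', Fin.cons B Bs', ?_, ?_, ?_⟩
        · intro i
          refine Fin.cases ?_ ?_ i
          · exact hxU
          · exact fun i' => (hU' i').1
        · intro j
          refine Fin.cases ?_ ?_ j
          · exact hBG
          · exact fun j' => (hG' j').1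
        · intro i j
          refine Fin.cases ?_ ?_ i
          · refine Fin.cases ?_ ?_ j
            · simp [hxB]
            · intro j'
              simp [(hG' j').2, Fin.succ_pos]
          · intro i'
            refine Fin.cases ?_ ?_ j
            · simp [(hU' i').2]
            · intro j'
              simp [Fin.succ_lt_succ_iff, hpat i' j']
      · obtain ⟨η, B', U'', G'', h1', h2', h3', h4', h5', h6', h7', h8'⟩ := hround
        exact Or.inr ⟨η, B', U'', G'', (h1'.1 : η ∈ U), (h2'.1 : B' ∈ G), h3',
          fun y hy => (h4' hy).1, h5', fun A hA => ((h6' hA).1 : A ∈ G), h7', h8'⟩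
    · -- extract a round from U ∩ B
      obtain ⟨z, hz, -, hzm⟩ := h2
      exact Or.inr ⟨z, B, U ∩ B, {A ∈ {A ∈ G | x ∈ A} | z ∉ A},
        hz.1, hBG, hz.2, fun y hy => hy.1, fun y hy => hy.2,
        fun A hA => hA.1.1, fun A hA => hA.2, hzm⟩

end LdimAux

namespace LdimAux
variable {X : Type*}

lemma halfGraph_mono {G G' : Set (Set X)} {k : ℕ} (hGG : G ⊆ G') (h : HalfGraph G k) :
    HalfGraph G' k := by
  obtain ⟨a, A, hA, hp⟩ := h
  exact ⟨a, A, fun j => hGG (hA j), hp⟩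

def cf (k : ℕ) : ℕ → ℕ
  | 0 => 0
  | r+1 => (k + 1) * (cf k r + 3)

lemma chain (k : ℕ) : ∀ (r : ℕ) (U : Set X) (G : Set (Set X)), Shat U G (cf k r) →
    HalfGraph G k ∨
    ∃ (η : Fin r → X) (Bs : Fin r → Set X),
      (∀ i, η i ∈ U) ∧ (∀ j, Bs j ∈ G) ∧ ∀ i j, η i ∈ Bs j ↔ j ≤ i := by
  intro r
  induction r with
  | zero =>
    intro U G _
    exact Or.inr ⟨Fin.elim0, Fin.elim0, fun i => i.elim0, fun j => j.elim0, fun i => i.elim0⟩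
  | succ r ih =>
    intro U G h
    rcases walk (cf k r) (k + 1) U G h with ⟨xs, Bs, hU, hG, hpat⟩ | hround
    · -- strict half-graph of size k+1 gives HalfGraph G k
      refine Or.inl ⟨fun i => xs i.castSucc, fun j => Bs j.succ, fun j => hG _, fun i j => ?_⟩
      rw [hpat]
      exact Fin.castSucc_lt_succ_iff
    · obtain ⟨η₀, B₀, U', G', hη₀U, hB₀G, hη₀B₀, hU'U, hU'B₀, hG'G, hη₀G', hsh⟩ := hround
      rcases ih U' G' hsh with hg | ⟨η', Bs', h1, h2, h3⟩
      · exact Or.inl (halfGraph_mono hG'G hg)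
      · refine Or.inr ⟨Fin.cons η₀ η', Fin.cons B₀ Bs', ?_, ?_, ?_⟩
        · intro i
          refine Fin.cases ?_ ?_ i
          · exact hη₀U
          · exact fun i' => hU'U (h1 i')
        · intro j
          refine Fin.cases ?_ ?_ j
          · exact hB₀G
          · exact fun j' => hG'G (h2 j')
        · intro i j
          refine Fin.cases ?_ ?_ i
          · refine Fin.cases ?_ ?_ j
            · simp [hη₀B₀]
            · intro j'
              simp [hη₀G' _ (h2 j'), Fin.succ_ne_zero]
          · intro i'
            refine Fin.cases ?_ ?_ j
            · simp [hU'B₀ (h1 i'), Fin.zero_le]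
            · intro j'
              simp [Fin.succ_le_succ_iff, h3 i' j']

lemma halfGraph_of_shat (F : Set (Set X)) (h : ∀ n, Shat (Set.univ : Set X) F n) (n : ℕ) :
    HalfGraph F n := by
  rcases chain n n Set.univ F (h _) with hg | ⟨η, Bs, -, hG, hpat⟩
  · exact hg
  · refine ⟨fun i => η i.rev, fun j => Bs j.rev, fun j => hG _, fun i j => ?_⟩
    rw [hpat]
    exact Fin.rev_le_rev

end LdimAux

namespace LdimAux
variable {X : Type*}

lemma shat_of_halfGraph : ∀ (n : ℕ) (G : Set (Set X)) (a : Fin (2 ^ n) → X)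
    (A : Fin (2 ^ n) → Set X), (∀ j, A j ∈ G) → (∀ i j, a i ∈ A j ↔ i ≤ j) →
    Shat (Set.univ : Set X) G n := by
  intro n
  induction n with
  | zero =>
    intro G a A hA _
    exact ⟨A ⟨0, by norm_num⟩, hA _⟩
  | succ n ih =>
    intro G a A hA hpat
    have h0 : 0 < 2 ^ n := pow_pos (by norm_num) n
    have h2 : 2 ^ (n + 1) = 2 ^ n + 2 ^ n := by rw [pow_succ]; ring
    have hlt : ∀ m : ℕ, m < 2 ^ n → m < 2 ^ (n + 1) := fun m hm => by omega
    have hlt2 : ∀ m : ℕ, m < 2 ^ n → 2 ^ n + m < 2 ^ (n + 1) := fun m hm => by omega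
    have hpos : (2 : ℕ) ^ n < 2 ^ (n + 1) := by omega
    set x := a ⟨2 ^ n, hpos⟩ with hx
    refine ⟨x, Set.mem_univ x, ?_, ?_⟩
    · refine ih _ (fun i => a ⟨2 ^ n + i.1, hlt2 _ i.2⟩) (fun j => A ⟨2 ^ n + j.1, hlt2 _ j.2⟩)
        (fun j => ⟨hA _, ?_⟩) (fun i j => ?_)
      · exact (hpat ⟨2 ^ n, hpos⟩ ⟨2 ^ n + j.1, hlt2 _ j.2⟩).mpr (by simp [Fin.mk_le_mk])
      · rw [hpat]
        simp only [Fin.mk_le_mk, Fin.le_def]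
        omega
    · refine ih _ (fun i => a ⟨i.1, hlt _ i.2⟩) (fun j => A ⟨j.1, hlt _ j.2⟩)
        (fun j => ⟨hA _, ?_⟩) (fun i j => ?_)
      · intro hxA
        have := (hpat ⟨2 ^ n, hpos⟩ ⟨j.1, hlt _ j.2⟩).mp hxA
        simp only [Fin.mk_le_mk] at this
        omega
      · rw [hpat]
        simp only [Fin.mk_le_mk, Fin.le_def]

end LdimAux

namespace LdimAux
variable {X : Type*}

lemma ldimGe_to_shat : ∀ (n : ℕ) (F : Set (Set X)), LdimGe F n → Shat (Set.univ : Set X) F n := by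
  intro n
  induction n with
  | zero =>
    intro F ⟨t, ht⟩
    obtain ⟨A, hA, -⟩ := ht (fun i => i.elim0)
    exact ⟨A, hA⟩
  | succ n ih =>
    intro F ⟨t, ht⟩
    set x := t ⟨0, Nat.succ_pos n⟩ (fun _ => false) with hxdef
    have key : ∀ c : Bool, Shat (Set.univ : Set X) {A ∈ F | (x ∈ A) = (c = true)} n := by
      intro c
      apply ih
      refine ⟨fun k σ => t k.succ (fun i => if h : i.1 = 0 then c
        else σ ⟨i.1 - 1, by have h2 := i.2; simp only [Fin.val_succ] at h2; omega⟩), ?_⟩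
      intro σ
      set σ' : Fin (n + 1) → Bool :=
        fun i => if h : i.1 = 0 then c else σ ⟨i.1 - 1, by omega⟩ with hσ'
      obtain ⟨A, hAF, hcond⟩ := ht σ'
      have hA0 : (x ∈ A) = (c = true) := by
        have h0 := hcond ⟨0, Nat.succ_pos n⟩
        have harg : (fun i : Fin (0 : ℕ) => σ' ⟨i.1, i.2.trans (Nat.succ_pos n)⟩) =
            (fun _ => false) := by
          funext i
          exact absurd i.2 (Nat.not_lt_zero _)
        rw [harg] at h0
        simp only [σ', hσ'] at h0
        rw [← hxdef] at h0
        simp at h0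
        by_cases hc : c
        · simp [hc] at h0 ⊢
          exact h0
        · simp [Bool.not_eq_true] at hc
          simp [hc] at h0 ⊢
          exact h0
      refine ⟨A, ⟨hAF, hA0⟩, ?_⟩
      intro k
      have hk := hcond k.succ
      have harg : (fun i : Fin k.succ.1 => σ' ⟨i.1, i.2.trans k.succ.2⟩) =
          (fun i : Fin k.succ.1 => if h : i.1 = 0 then c
            else (fun j : Fin k.1 => σ ⟨j.1, j.2.trans k.2⟩)
              ⟨i.1 - 1, by have h2 := i.2; simp only [Fin.val_succ] at h2; omega⟩) := by
        funext i
        simp only [σ', hσ']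
      rw [harg] at hk
      have hrhs : σ' k.succ = σ k := by
        simp only [σ', hσ', Fin.val_succ]
        simp
      rw [hrhs] at hk
      exact hk
    refine ⟨x, Set.mem_univ x, ?_, ?_⟩
    · exact shat_mono (le_refl _) (fun A hA => ⟨hA.1, by simpa using hA.2⟩) (key true)
    · exact shat_mono (le_refl _) (fun A hA => ⟨hA.1, by simpa using hA.2⟩) (key false)

end LdimAux

namespace LdimAux
variable {X : Type*}

set_option maxHeartbeats 2000000 in
lemma shat_to_ldimGe : ∀ (n : ℕ) (F : Set (Set X)), Shat (Set.univ : Set X) F n → LdimGe F n := by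
  intro n
  induction n with
  | zero =>
    intro F ⟨A, hA⟩
    exact ⟨fun k => k.elim0, fun σ => ⟨A, hA, fun k => k.elim0⟩⟩
  | succ n ih =>
    intro F h
    obtain ⟨x, -, hp, hm⟩ := h
    obtain ⟨tp, htp⟩ := ih _ hp
    obtain ⟨tm, htm⟩ := ih _ hm
    refine ⟨fun k σ => if h0 : k.1 = 0 then x else
      (cond (σ ⟨0, by omega⟩)
        (tp ⟨k.1 - 1, by have := k.2; omega⟩
          (fun i => σ ⟨i.1 + 1, by have h2 : i.1 < k.1 - 1 := i.2; omega⟩))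
        (tm ⟨k.1 - 1, by have := k.2; omega⟩
          (fun i => σ ⟨i.1 + 1, by have h2 : i.1 < k.1 - 1 := i.2; omega⟩))), ?_⟩
    intro σ
    rcases hc : σ ⟨0, Nat.succ_pos n⟩ with hfv | htv
    · -- σ 0 = false : use tm
      obtain ⟨A, hAF, hcond⟩ := htm (fun j => σ ⟨j.1 + 1, by have := j.2; omega⟩)
      refine ⟨A, hAF.1, ?_⟩
      intro k
      by_cases h0 : k.1 = 0
      · have hk0 : k = ⟨0, Nat.succ_pos n⟩ := Fin.ext h0
        subst hk0
        simp only [dif_pos]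
        rw [hc]
        simp [hAF.2]
      · have hlt : k.1 - 1 < n := by have := k.2; omega
        have hcnd := hcond ⟨k.1 - 1, hlt⟩
        simp only [dif_neg h0]
        have hσ0 : σ ⟨0, by omega⟩ = false := hc
        rw [hσ0]
        simp only [Bool.cond_false]
        have harg : (fun i : Fin ((⟨k.1 - 1, hlt⟩ : Fin n)).1 =>
            (fun j : Fin n => σ ⟨j.1 + 1, by have := j.2; omega⟩) ⟨i.1, i.2.trans hlt⟩) =
            (fun i : Fin ((⟨k.1 - 1, hlt⟩ : Fin n)).1 =>
              (fun i' : Fin k.1 => σ ⟨i'.1, i'.2.trans k.2⟩)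
                ⟨i.1 + 1, by have h2 : i.1 < k.1 - 1 := i.2; omega⟩) := by
          funext i
          rfl
        rw [harg] at hcnd
        have hrhs : σ ⟨(⟨k.1 - 1, hlt⟩ : Fin n).1 + 1,
            by show k.1 - 1 + 1 < n + 1; omega⟩ = σ k := by
          congr 1
          exact Fin.ext (by show k.1 - 1 + 1 = k.1; omega)
        rw [hrhs] at hcnd
        exact hcnd
    · -- σ 0 = true : use tp
      obtain ⟨A, hAF, hcond⟩ := htp (fun j => σ ⟨j.1 + 1, by have := j.2; omega⟩)
      refine ⟨A, hAF.1, ?_⟩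
      intro k
      by_cases h0 : k.1 = 0
      · have hk0 : k = ⟨0, Nat.succ_pos n⟩ := Fin.ext h0
        subst hk0
        simp only [dif_pos]
        rw [hc]
        simp [hAF.2]
      · have hlt : k.1 - 1 < n := by have := k.2; omega
        have hcnd := hcond ⟨k.1 - 1, hlt⟩
        simp only [dif_neg h0]
        have hσ0 : σ ⟨0, by omega⟩ = true := hc
        rw [hσ0]
        simp only [Bool.cond_true]
        have harg : (fun i : Fin ((⟨k.1 - 1, hlt⟩ : Fin n)).1 =>
            (fun j : Fin n => σ ⟨j.1 + 1, by have := j.2; omega⟩) ⟨i.1, i.2.trans hlt⟩) =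
            (fun i : Fin ((⟨k.1 - 1, hlt⟩ : Fin n)).1 =>
              (fun i' : Fin k.1 => σ ⟨i'.1, i'.2.trans k.2⟩)
                ⟨i.1 + 1, by have h2 : i.1 < k.1 - 1 := i.2; omega⟩) := by
          funext i
          rfl
        rw [harg] at hcnd
        have hrhs : σ ⟨(⟨k.1 - 1, hlt⟩ : Fin n).1 + 1,
            by show k.1 - 1 + 1 < n + 1; omega⟩ = σ k := by
          congr 1
          exact Fin.ext (by show k.1 - 1 + 1 = k.1; omega)
        rw [hrhs] at hcnd
        exact hcnd

end LdimAux

namespace LdimAux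
variable {X : Type*}

lemma ldim_eq_top_of_all (F : Set (Set X)) (h : ∀ n, LdimGe F n) : Ldim F = ⊤ := by
  have hle : ∀ n : ℕ, (n : ℕ∞) ≤ Ldim F := fun n => le_iSup₂_of_le n (h n) le_rfl
  by_contra hne
  lift Ldim F to ℕ using hne with m hm
  have h1 := hle (m + 1)
  rw [Nat.cast_le] at h1
  omega

lemma ldimGe_of_ldim_top (F : Set (Set X)) (h : Ldim F = ⊤) (n : ℕ) : LdimGe F n := by
  by_contra hn
  have hbd : ∀ m : ℕ, LdimGe F m → m ≤ n := by
    intro m hm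
    by_contra hmn
    exact hn (shat_to_ldimGe n F (shat_anti (by omega) (ldimGe_to_shat m F hm)))
  have : Ldim F ≤ (n : ℕ∞) := by
    refine iSup₂_le ?_
    intro m hm
    exact_mod_cast hbd m hm
  rw [h] at this
  exact absurd (lt_of_lt_of_le (ENat.coe_lt_top n) this) (lt_irrefl _)

end LdimAux

/-- `φ(x;y)` has the order property iff the set system
`F_φ = {φ(M,b) : b ∈ M^{|y|}}` has infinite Littlestone dimension. -/
theorem orderProperty_iff_ldim_top {L : Language} (M : Type*) [L.Structure M]
    {α β : Type*} (φ : L.Formula (α ⊕ β)) :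
    HasOrderProperty M φ ↔ Ldim (conceptClass M φ) = ⊤ := by
  constructor
  · intro hop
    apply LdimAux.ldim_eq_top_of_all
    intro n
    obtain ⟨a, b, hab⟩ := hop (2 ^ n)
    exact LdimAux.shat_to_ldimGe n _ (LdimAux.shat_of_halfGraph n (conceptClass M φ) a
      (fun j => {v | φ.Realize (Sum.elim v (b j))}) (fun j => ⟨b j, rfl⟩) (fun i j => hab i j))
  · intro h n
    have hsh : ∀ m, LdimAux.Shat Set.univ (conceptClass M φ) m :=
      fun m => LdimAux.ldimGe_to_shat m _ (LdimAux.ldimGe_of_ldim_top _ h m)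
    obtain ⟨a, A, hA, hpat⟩ := LdimAux.halfGraph_of_shat _ hsh n
    choose b hb using hA
    refine ⟨a, b, fun i j => ?_⟩
    have hmem : a i ∈ A j ↔ φ.Realize (Sum.elim (a i) (b j)) := by
      rw [hb j]
      exact Iff.rfl
    rw [← hmem]
    exact hpat i j
end

section
/- For a formula φ(x;y) over a structure M, the Shelah 2-rank R(∅, φ, 2) equals the Littlestone (thicket) dimension of the set system {φ(b, M) : b ∈ M^{|y|}} on M^{|x|} whenever either is finite. -/
open FirstOrder

/-- `RankGe M φ n π`: the Shelah 2-rank of the partial `φ`-type `π` is at least `n`.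
Here a partial `φ`-type (over `M`) is a set of signed instances `(b, ε)`, meaning
`φ(x, b)^ε`; `RankGe M φ 0 π` says `π` is consistent (realized in the monster `M`),
and `RankGe M φ (n+1) π` says some instance `φ(x,b)` splits `π` into two extensions
of rank at least `n`. -/
def RankGe {L : Language} (M : Type*) [L.Structure M] {α β : Type*}
    (φ : L.Formula (α ⊕ β)) : ℕ → Set ((β → M) × Bool) → Prop
  | 0, π => ∃ a : α → M, ∀ p ∈ π, (φ.Realize (Sum.elim a p.1) ↔ p.2 = true)
  | n + 1, π => ∃ b : β → M,
      RankGe M φ n (insert (b, true) π) ∧ RankGe M φ n (insert (b, false) π)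

/-- `t k τ` labels the vertex at depth `k` reached along the path `τ` (`true` = "go left"),
as in `LdimGe`. -/
abbrev BinaryElementTree (Y : Type*) (n : ℕ) := (k : Fin n) → (Fin k.1 → Bool) → Y

def branchPrefix {n : ℕ} (σ : Fin n → Bool) (k : Fin n) : Fin k.1 → Bool :=
  fun i => σ ⟨i.1, i.2.trans k.2⟩

namespace BinaryElementTree

variable {Y : Type*} {n : ℕ}

def node (b : Y) (t : Bool → BinaryElementTree Y n) : BinaryElementTree Y (n + 1) :=
  Fin.cases (fun _ => b) fun j (τ : Fin (j.1 + 1) → Bool) => t (τ 0) j (Fin.tail τ)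

/-- The signed labels met along the branch `σ`: for the rank, the instances `φ(x, b)^ε` of the
branch. -/
def branchType (t : BinaryElementTree Y n) (σ : Fin n → Bool) : Set (Y × Bool) :=
  Set.range fun k => (t k (branchPrefix σ k), σ k)

theorem branchType_zero (t : BinaryElementTree Y 0) (σ : Fin 0 → Bool) :
    branchType t σ = ∅ :=
  Set.range_eq_empty _

theorem branchType_node_cons (b : Y) (t : Bool → BinaryElementTree Y n) (ε : Bool)
    (σ : Fin n → Bool) :
    branchType (node b t) (Fin.cons ε σ) = insert (b, ε) (branchType (t ε) σ) := by
  ext p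
  simp only [branchType, Set.mem_range, Set.mem_insert_iff, Fin.exists_fin_succ]
  exact or_congr eq_comm Iff.rfl

theorem exists_node_iff {P : BinaryElementTree Y (n + 1) → Prop} :
    (∃ t, P t) ↔ ∃ b t, P (node b t) := by
  refine ⟨fun ⟨t, ht⟩ => ⟨t 0 finZeroElim, fun ε j τ => t j.succ (Fin.cons ε τ), ?_⟩,
    fun ⟨b, t, ht⟩ => ⟨_, ht⟩⟩
  convert ht
  funext k τ
  induction k using Fin.cases with
  | zero => exact congrArg (t 0) (funext fun i : Fin 0 => i.elim0)
  | succ j => exact congrArg (t j.succ) (Fin.cons_self_tail τ)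

theorem iff_exists_tree_of_succ_iff (R : ℕ → Set (Y × Bool) → Prop)
    (hR : ∀ n π, R (n + 1) π ↔ ∃ b, R n (insert (b, true) π) ∧ R n (insert (b, false) π))
    (n : ℕ) (π : Set (Y × Bool)) :
    R n π ↔ ∃ t : BinaryElementTree Y n, ∀ σ, R 0 (π ∪ branchType t σ) := by
  induction n generalizing π with
  | zero => simp only [branchType_zero, Set.union_empty, exists_const, forall_const]
  | succ n ih =>
    calc R (n + 1) π
        ↔ ∃ b, ∀ ε, ∃ t : BinaryElementTree Y n, ∀ σ,
            R 0 (insert (b, ε) π ∪ branchType t σ) := by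
          simp only [hR, Bool.forall_bool, ih, and_comm]
      _ ↔ ∃ b, ∃ t : Bool → BinaryElementTree Y n, ∀ ε σ,
            R 0 (insert (b, ε) π ∪ branchType (t ε) σ) := by
          simp only [Classical.skolem]
      _ ↔ ∃ t : BinaryElementTree Y (n + 1), ∀ σ, R 0 (π ∪ branchType t σ) := by
          simp only [exists_node_iff, Fin.forall_fin_succ_pi, branchType_node_cons,
            Set.union_insert, Set.insert_union]

end BinaryElementTree

open BinaryElementTree

theorem ldimGe_iff_exists_tree {X : Type*} (F : Set (Set X)) (n : ℕ) :
    LdimGe F n ↔ ∃ t : BinaryElementTree X n, ∀ σ,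
      ∃ A ∈ F, ∀ p ∈ branchType t σ, p.1 ∈ A ↔ p.2 = true := by
  simp only [LdimGe, branchType, Set.forall_mem_range]
  rfl

theorem rankGe_zero_iff {L : Language} (M : Type*) [L.Structure M] {α β : Type*}
    (φ : L.Formula (α ⊕ β)) (π : Set ((β → M) × Bool)) :
    RankGe M φ 0 π ↔ ∃ A ∈ {S : Set (β → M) | ∃ a : α → M, S = {b | φ.Realize (Sum.elim a b)}},
      ∀ p ∈ π, p.1 ∈ A ↔ p.2 = true := by
  constructor
  · rintro ⟨a, ha⟩
    exact ⟨_, ⟨a, rfl⟩, ha⟩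
  · rintro ⟨_, ⟨a, rfl⟩, ha⟩
    exact ⟨a, ha⟩

/-- the Shelah 2-rank `R(∅, φ, 2)` coincides with the Littlestone
(thicket) dimension of the set system on `M^{|y|}` given by
`{φ(a, M) : a ∈ M^{|x|}}`: for every `n`, the rank is `≥ n` iff the thicket
dimension is `≥ n`; in particular they are equal whenever either is finite. -/
theorem shelah_rank_eq_thicket_dim {L : Language} (M : Type*) [L.Structure M]
    {α β : Type*} (φ : L.Formula (α ⊕ β)) :
    ∀ n : ℕ,
      (RankGe M φ n ∅ ↔
        LdimGe {S : Set (β → M) |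
          ∃ a : α → M, S = {b : β → M | φ.Realize (Sum.elim a b)}} n) := by
  intro n
  rw [iff_exists_tree_of_succ_iff (RankGe M φ) (fun _ _ => Iff.rfl), ldimGe_iff_exists_tree]
  simp only [Set.empty_union, rankGe_zero_iff]
end

section
/- If a theory T is stable (equivalently, no formula has the order property), then for every formula φ(x;y), every concept class C_φ = {φ(M, b) : b ∈ M^{|y|}} is online learnable in the realizable setting with mistake bound R(∅, φ, 2) < ∞. -/
open FirstOrder

/-- Recursive shattered-tree predicate with label constraint `P`. -/
def STP {X : Type*} (P : Set X) : ℕ → Set (Set X) → Prop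
  | 0, F => F.Nonempty
  | (d+1), F => ∃ x ∈ P, STP P d {A ∈ F | x ∈ A} ∧ STP P d {A ∈ F | x ∉ A}

theorem STP_mono_F {X : Type*} {P : Set X} : ∀ {d : ℕ} {F G : Set (Set X)},
    F ⊆ G → STP P d F → STP P d G := by
  intro d
  induction d with
  | zero => exact fun h hn => hn.mono h
  | succ d ih =>
    rintro F G hFG ⟨x, hx, h1, h0⟩
    exact ⟨x, hx, ih (fun A hA => ⟨hFG hA.1, hA.2⟩) h1, ih (fun A hA => ⟨hFG hA.1, hA.2⟩) h0⟩

theorem STP_mono_P {X : Type*} {P Q : Set X} (hPQ : P ⊆ Q) :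
    ∀ {d : ℕ} {F : Set (Set X)}, STP P d F → STP Q d F := by
  intro d
  induction d with
  | zero => exact fun h => h
  | succ d ih => rintro F ⟨x, hx, h1, h0⟩; exact ⟨x, hPQ hx, ih h1, ih h0⟩

theorem STP_nonempty {X : Type*} {P : Set X} : ∀ {d : ℕ} {F : Set (Set X)},
    STP P d F → F.Nonempty := by
  intro d
  induction d with
  | zero => exact fun h => h
  | succ d ih =>
    rintro F ⟨x, _, h1, _⟩
    exact (ih h1).mono (fun A hA => hA.1)

theorem STP_succ_le {X : Type*} {P : Set X} : ∀ {d : ℕ} {F : Set (Set X)},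
    STP P (d+1) F → STP P d F := by
  intro d
  induction d with
  | zero => exact fun h => STP_nonempty h
  | succ d ih => rintro F ⟨x, hx, h1, h0⟩; exact ⟨x, hx, ih h1, ih h0⟩

theorem STP_mono_d {X : Type*} {P : Set X} {d' d : ℕ} (h : d' ≤ d) {F : Set (Set X)}
    (hF : STP P d F) : STP P d' F := by
  induction d generalizing F with
  | zero => obtain rfl : d' = 0 := Nat.le_zero.mp h; exact hF
  | succ d ih =>
    rcases Nat.lt_or_ge d' (d+1) with hlt | hge
    · exact ih (by omega) (STP_succ_le hF)
    · have hd : d' = d + 1 := by omega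
      exact hd ▸ hF

/-- Weak tree-Ramsey: a shattered tree of depth `∑ e i` whose labels are colored
with `k` colors contains a monochromatic shattered subtree of color `i` and depth `e i`. -/
theorem STP_ramsey {X : Type*} (k : ℕ) (hk : 0 < k) :
    ∀ (d : ℕ) (e : ℕ → ℕ), d = ∑ i ∈ Finset.range k, e i →
    ∀ (c : X → ℕ) (P : Set X) (F : Set (Set X)), (∀ x ∈ P, c x < k) →
    STP P d F → ∃ i < k, STP (P ∩ {x | c x = i}) (e i) F := by
  intro d
  induction d with
  | zero =>
    intro e he c P F hc hF
    refine ⟨0, hk, ?_⟩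
    have : e 0 = 0 := by
      have := (Finset.sum_eq_zero_iff_of_nonneg (by intros; positivity)).mp he.symm
      exact this 0 (Finset.mem_range.mpr hk)
    rw [this]; exact hF
  | succ d ih =>
    intro e he c P F hc hF
    obtain ⟨x, hxP, h1, h0⟩ := hF
    set i₀ := c x with hi₀
    have hi₀k : i₀ < k := hc x hxP
    rcases Nat.eq_zero_or_pos (e i₀) with hz | hpos
    · refine ⟨i₀, hi₀k, ?_⟩
      rw [hz]
      exact (STP_nonempty h1).mono (fun A hA => hA.1)
    · set e' := Function.update e i₀ (e i₀ - 1) with he'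
      have hsum : d = ∑ i ∈ Finset.range k, e' i := by
        have hmem : i₀ ∈ Finset.range k := Finset.mem_range.mpr hi₀k
        have h1' : ∑ i ∈ Finset.range k, e' i
            = (e i₀ - 1) + ∑ i ∈ Finset.range k \ {i₀}, e i := by
          rw [he']; exact Finset.sum_update_of_mem hmem e (e i₀ - 1)
        have h2' : ∑ i ∈ Finset.range k, e i
            = (∑ i ∈ Finset.range k \ {i₀}, e i) + e i₀ :=
          (Finset.sum_eq_sum_sdiff_singleton_add hmem e)
        omega
      have H1 := ih e' hsum c P _ hc h1
      have H0 := ih e' hsum c P _ hc h0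
      obtain ⟨i1, hi1, hs1⟩ := H1
      obtain ⟨i0', hi0', hs0⟩ := H0
      by_cases hA : i1 = i₀
      · by_cases hB : i0' = i₀
        · subst hA; subst hB
          refine ⟨i₀, hi₀k, ?_⟩
          have hupdate : e' i₀ = e i₀ - 1 := by rw [he', Function.update_self]
          rw [hupdate] at hs1 hs0
          have : e i₀ = (e i₀ - 1) + 1 := by omega
          rw [this]
          exact ⟨x, ⟨hxP, hi₀.symm ▸ rfl⟩, hs1, hs0⟩
        · refine ⟨i0', hi0', ?_⟩
          have : e' i0' = e i0' := by rw [he', Function.update_of_ne hB]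
          rw [this] at hs0
          exact STP_mono_F (fun A hA => hA.1) hs0
      · refine ⟨i1, hi1, ?_⟩
        have : e' i1 = e i1 := by rw [he', Function.update_of_ne hA]
        rw [this] at hs1
        exact STP_mono_F (fun A hA => hA.1) hs1

/-- Depth budget for the bottom-up construction. -/
def DE (n E : ℕ) : ℕ → ℕ
  | 0 => 0
  | (r+1) => DE n E r + 1 + n * E

theorem BU {X : Type*} (n : ℕ) (F : Set (Set X)) (E : ℕ) :
    ∀ (r t : ℕ), t + r = n → ∀ (G₀ G : Set (Set X)) (P : Set X)
      (a : Fin t → X) (A : Fin t → Set X),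
      G ⊆ G₀ → G₀ ⊆ F → (∀ j, A j ∈ G₀) → (∀ i j, a i ∈ A j ↔ i ≤ j) →
      (∀ B ∈ G, ∀ i, a i ∈ B) → STP P (DE n E r) G →
      HalfGraph F n ∨ ∃ C ∈ G₀, ∃ G', G' ⊆ G₀ ∧ STP (P ∩ C) E G' := by
  classical
  intro r
  induction r with
  | zero =>
    intro t ht G₀ G P a A hGG₀ hG₀F hAG₀ hiff hmem hST
    left
    obtain rfl : t = n := by omega
    exact ⟨a, A, fun j => hG₀F (hAG₀ j), hiff⟩
  | succ r ih =>
    intro t ht G₀ G P a A hGG₀ hG₀F hAG₀ hiff hmem hST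
    set c : X → ℕ := fun x => if h : ∃ j : Fin t, x ∈ A j then (h.choose).1 + 1 else 0
      with hc_def
    set e : ℕ → ℕ := fun i => if i = 0 then DE n E r + 1 else E with he_def
    have hsum : ∑ i ∈ Finset.range (t+1), e i = DE n E r + 1 + t * E := by
      rw [Finset.sum_range_succ']
      simp [he_def]
      ring
    have hd : ∑ i ∈ Finset.range (t+1), e i ≤ DE n E (r+1) := by
      rw [hsum]
      have ht' : t ≤ n := by omega
      have : t * E ≤ n * E := Nat.mul_le_mul_right _ ht'
      simp only [DE]
      omega
    have hST' : STP P (∑ i ∈ Finset.range (t+1), e i) G := STP_mono_d hd hST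
    have hc : ∀ x ∈ P, c x < t+1 := by
      intro x _
      by_cases h : ∃ j : Fin t, x ∈ A j
      · have : c x = (h.choose).1 + 1 := dif_pos h
        have := (h.choose).2
        omega
      · have : c x = 0 := dif_neg h
        omega
    obtain ⟨i, hik, hsub⟩ := STP_ramsey (t+1) (Nat.succ_pos t) _ e rfl c P G hc hST'
    cases i with
    | succ j =>
      right
      have hj : j < t := by omega
      have hsubP : P ∩ {x | c x = j+1} ⊆ P ∩ (A ⟨j, hj⟩ : Set X) := by
        rintro x ⟨hxP, hxc⟩
        refine ⟨hxP, ?_⟩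
        simp only [Set.mem_setOf_eq] at hxc
        by_cases h : ∃ j' : Fin t, x ∈ A j'
        · have hcx : c x = (h.choose).1 + 1 := dif_pos h
          have hv : (h.choose).1 = j := by omega
          have heq : (⟨j, hj⟩ : Fin t) = h.choose := Fin.ext (by simp [hv])
          rw [heq]
          exact h.choose_spec
        · have : c x = 0 := dif_neg h
          omega
      have he : e (j+1) = E := by simp [he_def]
      exact ⟨A ⟨j, hj⟩, hAG₀ _, G, hGG₀, STP_mono_P hsubP (he ▸ hsub)⟩
    | zero =>
      have he : e 0 = DE n E r + 1 := by simp [he_def]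
      rw [he] at hsub
      obtain ⟨x, ⟨hxP, hxc⟩, h1, _⟩ := hsub
      simp only [Set.mem_setOf_eq] at hxc
      have hxfree : ∀ j : Fin t, x ∉ A j := by
        intro j hj
        have h : ∃ j' : Fin t, x ∈ A j' := ⟨j, hj⟩
        have : c x = (h.choose).1 + 1 := dif_pos h
        omega
      obtain ⟨Anew, hAnew⟩ := STP_nonempty h1
      have hAG₀' : ∀ j : Fin (t+1), (Fin.snoc A Anew : Fin (t+1) → Set X) j ∈ G₀ := by
        intro j
        refine Fin.lastCases ?_ ?_ j
        · rw [Fin.snoc_last]; exact hGG₀ hAnew.1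
        · intro i'; rw [Fin.snoc_castSucc]; exact hAG₀ i'
      have hiff' : ∀ i j : Fin (t+1), (Fin.snoc a x : Fin (t+1) → X) i ∈ (Fin.snoc A Anew : Fin (t+1) → Set X) j ↔ i ≤ j := by
        intro i j
        refine Fin.lastCases ?_ ?_ i
        · refine Fin.lastCases ?_ ?_ j
          · simp only [Fin.snoc_last]
            exact iff_of_true hAnew.2 le_rfl
          · intro j'
            simp only [Fin.snoc_last, Fin.snoc_castSucc]
            exact iff_of_false (hxfree j') (not_le.mpr (Fin.castSucc_lt_last j'))
        · intro i'
          refine Fin.lastCases ?_ ?_ j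
          · simp only [Fin.snoc_last, Fin.snoc_castSucc]
            exact iff_of_true (hmem _ hAnew.1 i') (le_of_lt (Fin.castSucc_lt_last i'))
          · intro j'
            simp only [Fin.snoc_castSucc]
            rw [hiff i' j']
            exact (Fin.castSucc_le_castSucc_iff).symm
      have hmem' : ∀ B ∈ {B ∈ G | x ∈ B}, ∀ i : Fin (t+1), (Fin.snoc a x : Fin (t+1) → X) i ∈ B := by
        intro B hB i
        refine Fin.lastCases ?_ ?_ i
        · rw [Fin.snoc_last]; exact hB.2
        · intro i'; rw [Fin.snoc_castSucc]; exact hmem B hB.1 i'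
      rcases ih (t+1) (by omega) G₀ {B ∈ G | x ∈ B} (P ∩ {x' | c x' = 0})
        (Fin.snoc a x) (Fin.snoc A Anew) (fun B hB => hGG₀ hB.1) hG₀F hAG₀' hiff' hmem' h1
        with h | ⟨C, hC, G', hG', hstp⟩
      · exact Or.inl h
      · exact Or.inr ⟨C, hC, G', hG',
          STP_mono_P (Set.inter_subset_inter Set.inter_subset_left subset_rfl) hstp⟩

theorem halfGraph_of_rev {X : Type*} {F : Set (Set X)} {n : ℕ} (a : Fin n → X)
    (A : Fin n → Set X) (hA : ∀ j, A j ∈ F) (h : ∀ i j, a i ∈ A j ↔ j ≤ i) :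
    HalfGraph F n :=
  ⟨fun i => a i.rev, fun j => A j.rev, fun _ => hA _, fun i j => by
    rw [h]; exact Fin.rev_le_rev⟩

def TDdepth (n : ℕ) : ℕ → ℕ
  | 0 => 0
  | (k+1) => DE n (TDdepth n k + 1) n

theorem TD {X : Type*} (n : ℕ) (F : Set (Set X)) :
    ∀ (k s : ℕ), s + k = n → ∀ (G₀ : Set (Set X)) (P : Set X)
      (b : Fin s → X) (C : Fin s → Set X),
      G₀ ⊆ F → (∀ j, C j ∈ F) → (∀ i j, b i ∈ C j ↔ j ≤ i) →
      (∀ B ∈ G₀, ∀ i, b i ∉ B) → (∀ x ∈ P, ∀ j, x ∈ C j) →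
      STP P (TDdepth n k) G₀ → HalfGraph F n := by
  intro k
  induction k with
  | zero =>
    intro s hs G₀ P b C hG₀F hCF hiff hexcl hPcap hST
    obtain rfl : s = n := by omega
    exact halfGraph_of_rev b C hCF hiff
  | succ k ih =>
    intro s hs G₀ P b C hG₀F hCF hiff hexcl hPcap hST
    have hST' : STP P (DE n (TDdepth n k + 1) n) G₀ := hST
    rcases BU n F (TDdepth n k + 1) n 0 (by omega) G₀ G₀ P Fin.elim0 Fin.elim0
      subset_rfl hG₀F (fun j => j.elim0) (fun i => i.elim0) (fun B _ i => i.elim0) hST'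
      with hsucc | ⟨C', hC'G₀, G', hG'G₀, hstp⟩
    · exact hsucc
    · obtain ⟨x, hx, _, h0⟩ := hstp
      have hCF' : ∀ j : Fin (s+1), (Fin.snoc C C' : Fin (s+1) → Set X) j ∈ F := by
        intro j
        refine Fin.lastCases ?_ ?_ j
        · rw [Fin.snoc_last]; exact hG₀F hC'G₀
        · intro j'; rw [Fin.snoc_castSucc]; exact hCF j'
      have hiff' : ∀ i j : Fin (s+1),
          (Fin.snoc b x : Fin (s+1) → X) i ∈ (Fin.snoc C C' : Fin (s+1) → Set X) j ↔ j ≤ i := by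
        intro i j
        refine Fin.lastCases ?_ ?_ i
        · refine Fin.lastCases ?_ ?_ j
          · simp only [Fin.snoc_last]
            exact iff_of_true hx.2 le_rfl
          · intro j'
            simp only [Fin.snoc_last, Fin.snoc_castSucc]
            exact iff_of_true (hPcap x hx.1 j') (le_of_lt (Fin.castSucc_lt_last j'))
        · intro i'
          refine Fin.lastCases ?_ ?_ j
          · simp only [Fin.snoc_last, Fin.snoc_castSucc]
            exact iff_of_false (hexcl C' hC'G₀ i') (not_le.mpr (Fin.castSucc_lt_last i'))
          · intro j'
            simp only [Fin.snoc_castSucc]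
            rw [hiff i' j']
            exact (Fin.castSucc_le_castSucc_iff).symm
      have hexcl' : ∀ B ∈ {B ∈ G' | x ∉ B}, ∀ i : Fin (s+1),
          (Fin.snoc b x : Fin (s+1) → X) i ∉ B := by
        intro B hB i
        refine Fin.lastCases ?_ ?_ i
        · rw [Fin.snoc_last]; exact hB.2
        · intro i'; rw [Fin.snoc_castSucc]; exact hexcl B (hG'G₀ hB.1) i'
      have hPcap' : ∀ z ∈ P ∩ C', ∀ j : Fin (s+1), z ∈ (Fin.snoc C C' : Fin (s+1) → Set X) j := by
        intro z hz j
        refine Fin.lastCases ?_ ?_ j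
        · rw [Fin.snoc_last]; exact hz.2
        · intro j'; rw [Fin.snoc_castSucc]; exact hPcap z hz.1 j'
      exact ih (s+1) (by omega) {B ∈ G' | x ∉ B} (P ∩ C') (Fin.snoc b x) (Fin.snoc C C')
        (fun B hB => hG₀F (hG'G₀ hB.1)) hCF' hiff' hexcl' hPcap' h0

theorem stp_to_halfGraph {X : Type*} (F : Set (Set X)) (n : ℕ)
    (h : STP Set.univ (TDdepth n n) F) : HalfGraph F n :=
  TD n F n 0 (by omega) F Set.univ Fin.elim0 Fin.elim0 subset_rfl
    (fun j => j.elim0) (fun i => i.elim0) (fun B _ i => i.elim0)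
    (fun x _ j => j.elim0) h

theorem ldimGe_zero_iff {X : Type*} (F : Set (Set X)) :
    LdimGe F 0 ↔ F.Nonempty := by
  constructor
  · rintro ⟨t, h⟩
    obtain ⟨A, hA, -⟩ := h (fun i => i.elim0)
    exact ⟨A, hA⟩
  · rintro ⟨A, hA⟩
    exact ⟨fun k => k.elim0, fun σ => ⟨A, hA, fun k => k.elim0⟩⟩

theorem ldimGe_succ {X : Type*} (F : Set (Set X)) (n : ℕ) :
    LdimGe F (n+1) ↔ ∃ x : X, LdimGe {A ∈ F | x ∈ A} n ∧ LdimGe {A ∈ F | x ∉ A} n := by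
  constructor
  · rintro ⟨t, h⟩
    refine ⟨t ⟨0, Nat.succ_pos n⟩ (fun i => i.elim0), ?_⟩
    have key : ∀ b : Bool, LdimGe {A ∈ F | (t ⟨0, Nat.succ_pos n⟩ (fun i => i.elim0) ∈ A) = (b = true)} n := by
      intro b
      refine ⟨fun k σ'' => t k.succ (fun i => if h0 : i.1 = 0 then b else
        σ'' ⟨i.1 - 1, by have h2 : i.1 < k.1 + 1 := i.2; omega⟩), ?_⟩
      intro σ'
      set σ : Fin (n+1) → Bool := fun k => if h0 : k.1 = 0 then b else
        σ' ⟨k.1 - 1, by have h2 : k.1 < n + 1 := k.2; omega⟩ with hσ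
      obtain ⟨A, hA, hcond⟩ := h σ
      refine ⟨A, ⟨hA, ?_⟩, ?_⟩
      · have h0 := hcond ⟨0, Nat.succ_pos n⟩
        have he : (fun i : Fin 0 => σ ⟨i.1, i.2.trans (Nat.succ_pos n)⟩) = (fun i : Fin 0 => i.elim0) := by
          funext i; exact i.elim0
        rw [he] at h0
        have hσ0 : σ ⟨0, Nat.succ_pos n⟩ = b := by simp [hσ]
        rw [hσ0] at h0
        simp only [eq_iff_iff]
        exact h0
      · intro k
        have hσk : σ k.succ = σ' k := by
          simp only [hσ]
          rw [dif_neg (by simp [Fin.val_succ] : ¬ ((k.succ : Fin (n+1)).1 = 0))]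
          congr 1
        have hk := hcond k.succ
        rw [hσk] at hk
        exact hk
    refine ⟨?_, ?_⟩
    · have := key true
      simpa using this
    · have := key false
      simpa using this
  · rintro ⟨x, ⟨t1, h1⟩, ⟨t0, h0⟩⟩
    refine ⟨fun k => Fin.cases (fun _ => x)
      (fun j σ => (if σ ⟨0, Nat.succ_pos _⟩ then t1 else t0) j (fun i => σ i.succ)) k, ?_⟩
    intro σ
    have hzero : (⟨0, Nat.succ_pos n⟩ : Fin (n+1)) = 0 := by
      apply Fin.ext; simp
    have h00 : ∀ (pf : (0:ℕ) < n+1), (⟨0, pf⟩ : Fin (n+1)) = 0 := fun _ => Fin.ext (by simp)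
    cases hbool : σ 0 with
    | true =>
      obtain ⟨A, hA, hcond⟩ := h1 (fun j => σ j.succ)
      refine ⟨A, hA.1, ?_⟩
      intro k
      refine Fin.cases ?_ ?_ k
      · rw [hbool]
        exact iff_of_true hA.2 rfl
      · intro j
        simp only [Fin.cases_succ, h00, hbool]
        rw [if_pos trivial]
        exact hcond j
    | false =>
      obtain ⟨A, hA, hcond⟩ := h0 (fun j => σ j.succ)
      refine ⟨A, hA.1, ?_⟩
      intro k
      refine Fin.cases ?_ ?_ k
      · rw [hbool]
        exact iff_of_false hA.2 (by simp)
      · intro j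
        simp only [Fin.cases_succ, h00, hbool]
        rw [if_neg (by simp)]
        exact hcond j

theorem ldimGe_iff_stp {X : Type*} : ∀ (n : ℕ) (F : Set (Set X)),
    LdimGe F n ↔ STP Set.univ n F := by
  intro n
  induction n with
  | zero => intro F; rw [ldimGe_zero_iff]; exact Iff.rfl
  | succ n ih =>
    intro F
    rw [ldimGe_succ]
    constructor
    · rintro ⟨x, h1, h0⟩
      exact ⟨x, Set.mem_univ x, (ih _).mp h1, (ih _).mp h0⟩
    · rintro ⟨x, -, h1, h0⟩
      exact ⟨x, (ih _).mpr h1, (ih _).mpr h0⟩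

open Classical in
/-- The Littlestone rank of a class, capped at `N`. -/
noncomputable def mrk {X : Type*} (N : ℕ) (V : Set (Set X)) : ℕ :=
  Nat.findGreatest (fun k => STP (Set.univ : Set X) k V) N

theorem mrk_ge {X : Type*} {N : ℕ} {C V : Set (Set X)} (hN : ¬ STP Set.univ N C)
    (hVC : V ⊆ C) {k : ℕ} (hk : STP Set.univ k V) : k ≤ mrk N V := by
  have hkN : k ≤ N := by
    by_contra hgt
    exact hN (STP_mono_F hVC (STP_mono_d (by omega) hk))
  classical
  unfold mrk
  exact Nat.le_findGreatest hkN hk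

theorem mrk_spec {X : Type*} {N : ℕ} {V : Set (Set X)} (hV : V.Nonempty) :
    STP Set.univ (mrk N V) V := by
  classical
  unfold mrk
  exact Nat.findGreatest_spec (P := fun k => STP Set.univ k V) (Nat.zero_le N) (hV : STP Set.univ 0 V)

/-- Version space of a class given a history. -/
def vsp {X : Type*} (C : Set (Set X)) (l : List (X × Bool)) : Set (Set X) :=
  {A ∈ C | ∀ p ∈ l, (p.1 ∈ A ↔ p.2 = true)}

theorem vsp_nil {X : Type*} (C : Set (Set X)) : vsp C [] = C := by
  ext A; simp [vsp]

theorem vsp_append {X : Type*} (C : Set (Set X)) (l : List (X × Bool)) (p : X × Bool) :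
    vsp C (l ++ [p]) = {A ∈ vsp C l | (p.1 ∈ A ↔ p.2 = true)} := by
  ext A
  simp only [vsp, Set.mem_setOf_eq, List.forall_mem_append, List.forall_mem_singleton]
  tauto

theorem vsp_subset {X : Type*} (C : Set (Set X)) (l : List (X × Bool)) : vsp C l ⊆ C :=
  fun _ hA => hA.1

open Classical in
/-- The standard optimal algorithm. -/
noncomputable def soa {X : Type*} (C : Set (Set X)) (N : ℕ)
    (hist : List (X × Bool)) (x : X) : Bool :=
  if STP Set.univ (mrk N (vsp C hist)) {A ∈ vsp C hist | x ∈ A} then true else false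

open Classical in
theorem mistake_step {X : Type*} {C : Set (Set X)} {N : ℕ} (hN : ¬ STP Set.univ N C)
    {V : Set (Set X)} (hVC : V ⊆ C) {F₀ : Set X} (hF₀ : F₀ ∈ V)
    (x : X) (y : Bool) (hy : y = true ↔ x ∈ F₀) :
    (mrk N {A ∈ V | (x ∈ A ↔ y = true)} ≤ mrk N V) ∧
    (((if STP Set.univ (mrk N V) {A ∈ V | x ∈ A} then true else false) ≠ y) →
      mrk N {A ∈ V | (x ∈ A ↔ y = true)} < mrk N V) := by
  set V' := {A ∈ V | (x ∈ A ↔ y = true)} with hV'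
  have hV'V : V' ⊆ V := fun A hA => hA.1
  have hF₀V' : F₀ ∈ V' := ⟨hF₀, hy.symm⟩
  have hne' : V'.Nonempty := ⟨F₀, hF₀V'⟩
  have hle : mrk N V' ≤ mrk N V :=
    mrk_ge hN hVC (STP_mono_F hV'V (mrk_spec hne'))
  refine ⟨hle, ?_⟩
  intro hwrong
  by_contra hge
  have hge' : mrk N V ≤ mrk N V' := by omega
  have hstp' : STP Set.univ (mrk N V) V' := STP_mono_d hge' (mrk_spec hne')
  cases y with
  | false =>
    have hpred : STP Set.univ (mrk N V) {A ∈ V | x ∈ A} := by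
      by_contra hnot
      rw [if_neg hnot] at hwrong
      exact hwrong rfl
    have hsub : V' ⊆ {A ∈ V | x ∉ A} := by
      rintro A ⟨hAV, hiff⟩
      exact ⟨hAV, fun hx => by simpa using hiff.mp hx⟩
    have hbig : STP Set.univ (mrk N V + 1) V :=
      ⟨x, Set.mem_univ x, hpred, STP_mono_F hsub hstp'⟩
    have := mrk_ge hN hVC hbig
    omega
  | true =>
    have hpred : ¬ STP Set.univ (mrk N V) {A ∈ V | x ∈ A} := by
      by_contra hnot
      rw [if_pos hnot] at hwrong
      exact hwrong rfl
    apply hpred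
    refine STP_mono_F ?_ hstp'
    rintro A ⟨hAV, hiff⟩
    exact ⟨hAV, hiff.mpr rfl⟩

theorem Ldim_eq_mrk {X : Type*} (C : Set (Set X)) (N : ℕ) (hN : ¬ STP Set.univ N C) :
    Ldim C = (mrk N C : ℕ∞) := by
  rcases C.eq_empty_or_nonempty with rfl | hne
  · have h1 : ∀ k, ¬ LdimGe (∅ : Set (Set X)) k := by
      intro k hk
      exact Set.not_nonempty_empty (STP_nonempty ((ldimGe_iff_stp k ∅).mp hk))
    have h2 : mrk N (∅ : Set (Set X)) = 0 := by
      classical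
      unfold mrk
      rw [Nat.findGreatest_eq_zero_iff]
      intro k _ _ hk
      exact Set.not_nonempty_empty (STP_nonempty hk)
    rw [h2]
    simp [Ldim, h1]
  · apply le_antisymm
    · apply iSup₂_le
      intro k hk
      exact Nat.cast_le.mpr (mrk_ge hN subset_rfl ((ldimGe_iff_stp k C).mp hk))
    · have hd : LdimGe C (mrk N C) := (ldimGe_iff_stp _ C).mpr (mrk_spec hne)
      exact le_iSup₂ (f := fun n (_ : LdimGe C n) => (n : ℕ∞)) (mrk N C) hd

theorem orderProp_of_halfGraphs {L : Language} {M : Type*} [L.Structure M] {α β : Type*}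
    (φ : L.Formula (α ⊕ β)) (h : ∀ k, HalfGraph (conceptClass M φ) k) :
    HasOrderProperty M φ := by
  intro k
  obtain ⟨a, A, hA, hiff⟩ := h k
  choose b hb using hA
  refine ⟨a, b, fun i j => ?_⟩
  have := hiff i j
  rw [hb j] at this
  exact this

/-- if the theory of `M` is stable — no formula has the order
property — then for every formula `φ(x;y)` the concept class
`C_φ = {φ(M,b) : b ∈ M^{|y|}}` is online learnable in the realizable setting with a
finite mistake bound `d = Ldim C_φ` (`= R(∅,φ,2) < ∞`): there is an algorithm
making at most `d` mistakes on any sequence of instances labeled by any `F ∈ C_φ`. -/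
theorem stable_implies_online_learnable {L : Language} (M : Type*) [L.Structure M]
    (hstable : ∀ (n m : ℕ) (φ : L.Formula (Fin n ⊕ Fin m)), ¬ HasOrderProperty M φ) :
    ∀ (n m : ℕ) (φ : L.Formula (Fin n ⊕ Fin m)),
      ∃ d : ℕ, Ldim (conceptClass M φ) = (d : ℕ∞) ∧
        ∃ alg : List ((Fin n → M) × Bool) → (Fin n → M) → Bool,
          ∀ F ∈ conceptClass M φ, ∀ (T : ℕ) (x : Fin T → Fin n → M)
            (y : Fin T → Bool), (∀ t, (y t = true ↔ x t ∈ F)) →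
            (Finset.univ.filter fun t : Fin T =>
              alg (List.ofFn fun s : Fin t.1 =>
                (x ⟨s.1, s.2.trans t.2⟩, y ⟨s.1, s.2.trans t.2⟩)) (x t) ≠ y t).card
              ≤ d := by
  intro n m φ
  classical
  set C := conceptClass M φ with hCdef
  have hex : ∃ k, ¬ HalfGraph C k := by
    by_contra hall
    push_neg at hall
    exact hstable n m φ (orderProp_of_halfGraphs φ hall)
  obtain ⟨k₀, hk₀⟩ := hex
  set N := TDdepth k₀ k₀ with hNdef
  have hN : ¬ STP Set.univ N C := fun h => hk₀ (stp_to_halfGraph C k₀ h)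
  refine ⟨mrk N C, Ldim_eq_mrk C N hN, soa C N, ?_⟩
  intro F hF T x y hy
  set W : Fin T → Prop := fun t => soa C N (List.ofFn fun s : Fin t.1 =>
      (x ⟨s.1, s.2.trans t.2⟩, y ⟨s.1, s.2.trans t.2⟩)) (x t) ≠ y t with hW
  have main : ∀ t : ℕ, ∀ ht : t ≤ T,
      ((Finset.univ.filter fun s : Fin T => s.1 < t ∧ W s).card)
        + mrk N (vsp C (List.ofFn fun s : Fin t =>
            (x ⟨s.1, s.2.trans_le ht⟩, y ⟨s.1, s.2.trans_le ht⟩))) ≤ mrk N C := by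
    intro t
    induction t with
    | zero =>
      intro ht
      have h0 : (Finset.univ.filter fun s : Fin T => s.1 < 0 ∧ W s) = ∅ := by
        ext s; simp
      rw [h0]
      simp only [Finset.card_empty, List.ofFn_zero, vsp_nil, zero_add]
      exact le_rfl
    | succ t ih =>
      intro ht
      have ht' : t ≤ T := by omega
      have htT : t < T := ht
      set l := List.ofFn (fun s : Fin t =>
        ((x ⟨s.1, s.2.trans_le ht'⟩ : Fin n → M), y ⟨s.1, s.2.trans_le ht'⟩)) with hl
      have hlist : (List.ofFn fun s : Fin (t+1) =>
          ((x ⟨s.1, s.2.trans_le ht⟩ : Fin n → M), y ⟨s.1, s.2.trans_le ht⟩))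
          = l ++ [(x ⟨t, htT⟩, y ⟨t, htT⟩)] := by
        rw [List.ofFn_succ', List.concat_eq_append]
        rfl
      have hFV : F ∈ vsp C l := by
        refine ⟨hF, ?_⟩
        intro p hp
        rw [hl, List.mem_ofFn] at hp
        obtain ⟨s, hs⟩ := hp
        rw [← hs]
        exact (hy _).symm
      have hstep := mistake_step hN (vsp_subset C l) hFV (x ⟨t, htT⟩) (y ⟨t, htT⟩) (hy _)
      have hV' : {A ∈ vsp C l | ((x ⟨t, htT⟩ : Fin n → M) ∈ A ↔ y ⟨t, htT⟩ = true)}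
          = vsp C (l ++ [(x ⟨t, htT⟩, y ⟨t, htT⟩)]) := (vsp_append C l (x ⟨t, htT⟩, y ⟨t, htT⟩)).symm
      have hcard : (Finset.univ.filter fun s : Fin T => s.1 < t+1 ∧ W s).card
          = (Finset.univ.filter fun s : Fin T => s.1 < t ∧ W s).card
            + (if W ⟨t, htT⟩ then 1 else 0) := by
        have h1 : (Finset.univ.filter fun s : Fin T => s.1 < t+1 ∧ W s)
            = (Finset.univ.filter fun s : Fin T => s.1 < t ∧ W s)
              ∪ (Finset.univ.filter fun s : Fin T => s.1 = t ∧ W s) := by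
          ext s
          simp only [Finset.mem_filter, Finset.mem_union, Finset.mem_univ, true_and]
          constructor
          · rintro ⟨hlt, hw⟩
            rcases Nat.lt_succ_iff_lt_or_eq.mp hlt with h | h
            · exact Or.inl ⟨h, hw⟩
            · exact Or.inr ⟨h, hw⟩
          · rintro (⟨h, hw⟩ | ⟨h, hw⟩)
            · exact ⟨by omega, hw⟩
            · exact ⟨by omega, hw⟩
        have hdisj : Disjoint (Finset.univ.filter fun s : Fin T => s.1 < t ∧ W s)
            (Finset.univ.filter fun s : Fin T => s.1 = t ∧ W s) := by
          rw [Finset.disjoint_left]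
          intro s hs1 hs2
          rw [Finset.mem_filter] at hs1 hs2
          omega
        rw [h1, Finset.card_union_of_disjoint hdisj]
        congr 1
        by_cases hw : W ⟨t, htT⟩
        · rw [if_pos hw]
          rw [show (Finset.univ.filter fun s : Fin T => s.1 = t ∧ W s) = {⟨t, htT⟩} from ?_]
          · exact Finset.card_singleton _
          · ext s
            simp only [Finset.mem_filter, Finset.mem_univ, true_and, Finset.mem_singleton]
            constructor
            · rintro ⟨h1', h2'⟩
              exact Fin.ext h1'
            · rintro rfl
              exact ⟨rfl, hw⟩
        · rw [if_neg hw]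
          rw [Finset.card_eq_zero]
          ext s
          simp only [Finset.mem_filter, Finset.mem_univ, true_and, Finset.notMem_empty,
            iff_false, not_and]
          intro h1'
          have : s = ⟨t, htT⟩ := Fin.ext h1'
          rw [this]
          exact hw
      rw [hcard, hlist]
      by_cases hw : W ⟨t, htT⟩
      · have hwrong : (if STP Set.univ (mrk N (vsp C l)) {A ∈ vsp C l |
            (x ⟨t, htT⟩ : Fin n → M) ∈ A} then true else false) ≠ y ⟨t, htT⟩ := hw
        have hlt := hstep.2 hwrong
        rw [hV'] at hlt
        have hih := ih ht'
        rw [← hl] at hih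
        rw [if_pos hw]
        omega
      · have hle := hstep.1
        rw [hV'] at hle
        have hih := ih ht'
        rw [← hl] at hih
        rw [if_neg hw]
        omega
  have hfinal := main T le_rfl
  have hfilter : (Finset.univ.filter fun t : Fin T =>
      soa C N (List.ofFn fun s : Fin t.1 =>
        (x ⟨s.1, s.2.trans t.2⟩, y ⟨s.1, s.2.trans t.2⟩)) (x t) ≠ y t)
      = (Finset.univ.filter fun s : Fin T => s.1 < T ∧ W s) := by
    apply Finset.filter_congr
    intro s _
    simp only [hW, eq_iff_iff]
    constructor
    · intro h'
      exact ⟨s.2, h'⟩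
    · rintro ⟨-, h'⟩
      exact h'
  rw [hfilter]
  omega
end

section
/- If F has Littlestone dimension d and G has Littlestone dimension e (both families of subsets of the same set X), then the family F ∪ G has Littlestone dimension at most d + e + 1. -/
lemma ldimGe_mono {X : Type*} {F G : Set (Set X)} (h : F ⊆ G) {n : ℕ}
    (hF : LdimGe F n) : LdimGe G n := by
  obtain ⟨t, ht⟩ := hF
  exact ⟨t, fun σ => by obtain ⟨A, hA, h2⟩ := ht σ; exact ⟨A, h hA, h2⟩⟩

lemma ldimGe_zero {X : Type*} {F : Set (Set X)} (h : F.Nonempty) : LdimGe F 0 := by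
  obtain ⟨A, hA⟩ := h
  exact ⟨fun k => k.elim0, fun σ => ⟨A, hA, fun k => k.elim0⟩⟩

lemma ldimGe_anti {X : Type*} {F : Set (Set X)} {m n : ℕ} (hmn : m ≤ n)
    (hF : LdimGe F n) : LdimGe F m := by
  obtain ⟨t, ht⟩ := hF
  refine ⟨fun k σ => t ⟨k.1, k.2.trans_le hmn⟩ σ, fun σ => ?_⟩
  obtain ⟨A, hA, h2⟩ := ht (fun i => if h : i.1 < m then σ ⟨i.1, h⟩ else false)
  refine ⟨A, hA, fun k => ?_⟩
  have h3 := h2 ⟨k.1, k.2.trans_le hmn⟩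
  have e1 : (fun i : Fin k.1 => if h : i.1 < m then σ ⟨i.1, h⟩ else false)
      = fun i : Fin k.1 => σ ⟨i.1, i.2.trans k.2⟩ :=
    funext fun i => dif_pos (i.2.trans k.2)
  rw [e1] at h3 -- types may mismatch; fix later
  simpa [dif_pos k.2] using h3

lemma ldimGe_subtree {X : Type*} {H : Set (Set X)} {m : ℕ}
    (h : LdimGe H (m + 1)) :
    ∃ a : X, ∀ b : Bool, LdimGe {A | A ∈ H ∧ (a ∈ A ↔ b = true)} m := by
  obtain ⟨t, ht⟩ := h
  refine ⟨t ⟨0, Nat.succ_pos m⟩ (fun i => i.elim0), fun b => ?_⟩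
  refine ⟨fun k σ => t ⟨k.1 + 1, by omega⟩
    (fun i => if h : i.1 = 0 then b else σ ⟨i.1 - 1, by have hi : i.1 < k.1 + 1 := i.2; omega⟩), fun τ => ?_⟩
  obtain ⟨A, hA, h2⟩ := ht (fun i => if h : i.1 = 0 then b else τ ⟨i.1 - 1, by omega⟩)
  refine ⟨A, ⟨hA, ?_⟩, fun k => ?_⟩
  · have h0 := h2 ⟨0, Nat.succ_pos m⟩
    have ea : t ⟨0, Nat.succ_pos m⟩
        (fun i : Fin 0 => if h : ((⟨i.1, i.2.trans (Nat.succ_pos m)⟩ : Fin (m+1))).1 = 0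
          then b else τ ⟨i.1 - 1, i.elim0⟩)
        = t ⟨0, Nat.succ_pos m⟩ (fun i => i.elim0) :=
      congrArg _ (Subsingleton.elim _ _)
    rw [ea] at h0
    simpa using h0
  · have h3 := h2 ⟨k.1 + 1, by omega⟩
    have earg : (fun i : Fin (k.1+1) =>
        if h : ((⟨i.1, i.2.trans (by omega : k.1 + 1 < m + 1)⟩ : Fin (m+1))).1 = 0
          then b else τ ⟨i.1 - 1, by have hi : i.1 < k.1 + 1 := i.2; omega⟩)
        = (fun i : Fin (k.1+1) => if h : i.1 = 0 then b
            else (fun j : Fin k.1 => τ ⟨j.1, j.2.trans k.2⟩) ⟨i.1 - 1, by have hi : i.1 < k.1 + 1 := i.2; omega⟩) := by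
      funext i
      by_cases hi : i.1 = 0 <;> simp [hi]
    rw [earg] at h3
    have erhs : (if h : ((⟨k.1 + 1, by omega⟩ : Fin (m+1))).1 = 0 then b
        else τ ⟨(⟨k.1 + 1, by omega⟩ : Fin (m+1)).1 - 1, by have hk := k.2; omega⟩) = τ k := by
      simp
    rw [erhs] at h3
    exact h3

lemma ldimGe_combine {X : Type*} {F : Set (Set X)} {a : X} {m : ℕ}
    (h : ∀ b : Bool, LdimGe {A | A ∈ F ∧ (a ∈ A ↔ b = true)} m) :
    LdimGe F (m + 1) := by
  choose t ht using h
  refine ⟨fun k σ => if hk : k.1 = 0 then a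
    else t (σ ⟨0, Nat.pos_of_ne_zero hk⟩) ⟨k.1 - 1, by have := k.2; omega⟩
      (fun i => σ ⟨i.1 + 1, by have hi : i.1 < k.1 - 1 := i.2; omega⟩), fun σ => ?_⟩
  obtain ⟨A, ⟨hAF, hAa⟩, h2⟩ := ht (σ ⟨0, Nat.succ_pos m⟩)
    (fun i => σ ⟨i.1 + 1, by have := i.2; omega⟩)
  refine ⟨A, hAF, fun k => ?_⟩
  by_cases hk : k.1 = 0
  · simp only [dif_pos hk]
    have e2 : σ k = σ ⟨0, Nat.succ_pos m⟩ := congrArg σ (Fin.ext hk)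
    rw [e2]
    exact hAa
  · simp only [dif_neg hk]
    have hg := h2 ⟨k.1 - 1, by have := k.2; omega⟩
    have e2 : σ k = σ ⟨k.1 - 1 + 1, by have := k.2; omega⟩ :=
      congrArg σ (Fin.ext (by simp [Nat.sub_add_cancel (Nat.pos_of_ne_zero hk)]))
    rw [e2]
    exact hg

lemma ldimGe_split {X : Type*} (p q : ℕ) : ∀ (F G : Set (Set X)),
    LdimGe (F ∪ G) (p + q) → LdimGe F p ∨ LdimGe G q := by
  induction p with
  | zero =>
    intro F G h
    rcases F.eq_empty_or_nonempty with hF | hF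
    · right
      rw [hF, Set.empty_union] at h
      exact ldimGe_anti (by omega) h
    · left; exact ldimGe_zero hF
  | succ p ih =>
    intro F G h
    have h' : LdimGe (F ∪ G) ((p + q) + 1) := by
      have e : p + 1 + q = (p + q) + 1 := by omega
      rwa [e] at h
    obtain ⟨a, ha⟩ := ldimGe_subtree h'
    have key : ∀ b : Bool, LdimGe {A | A ∈ F ∧ (a ∈ A ↔ b = true)} p ∨ LdimGe G q := by
      intro b
      have hb := ha b
      have hsub : {A | A ∈ F ∪ G ∧ (a ∈ A ↔ b = true)} ⊆
          {A | A ∈ F ∧ (a ∈ A ↔ b = true)} ∪ {A | A ∈ G ∧ (a ∈ A ↔ b = true)} := by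
        rintro A ⟨hA | hA, hab⟩
        · exact Or.inl ⟨hA, hab⟩
        · exact Or.inr ⟨hA, hab⟩
      rcases ih {A | A ∈ F ∧ (a ∈ A ↔ b = true)} {A | A ∈ G ∧ (a ∈ A ↔ b = true)}
        (ldimGe_mono hsub hb) with h1 | h1
      · exact Or.inl h1
      · exact Or.inr (ldimGe_mono (fun A hA => hA.1) h1)
    rcases key true with h1 | h1
    · rcases key false with h2 | h2
      · exact Or.inl (ldimGe_combine (fun b => by cases b <;> assumption))
      · exact Or.inr h2
    · exact Or.inr h1

lemma ldimGe_le_of_ldim_eq {X : Type*} {F : Set (Set X)} {d : ℕ}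
    (hF : Ldim F = (d : ℕ∞)) {n : ℕ} (hn : LdimGe F n) : n ≤ d := by
  have h : (n : ℕ∞) ≤ Ldim F := le_iSup₂ (f := fun n (_ : LdimGe F n) => (n : ℕ∞)) n hn
  rw [hF] at h
  exact_mod_cast h


/-- if `Ldim F = d` and `Ldim G = e` then `Ldim (F ∪ G) ≤ d + e + 1`. -/
theorem ldim_union_le {X : Type*} (F G : Set (Set X)) (d e : ℕ)
    (hF : Ldim F = (d : ℕ∞)) (hG : Ldim G = (e : ℕ∞)) :
    Ldim (F ∪ G) ≤ (d : ℕ∞) + (e : ℕ∞) + 1 := by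

  have key : Ldim (F ∪ G) ≤ ((d + e + 1 : ℕ) : ℕ∞) := by
    refine iSup₂_le fun n hn => ?_
    rw [Nat.cast_le]
    by_contra hlt
    push_neg at hlt
    have h2 : LdimGe (F ∪ G) ((d + 1) + (e + 1)) := ldimGe_anti (by omega) hn
    rcases ldimGe_split (d + 1) (e + 1) F G h2 with h | h
    · exact absurd (ldimGe_le_of_ldim_eq hF h) (by omega)
    · exact absurd (ldimGe_le_of_ldim_eq hG h) (by omega)
  refine key.trans (le_of_eq ?_)
  push_cast
  ring
end
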